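/- Let r, s ∈ ℤ_{≥0}, α_0 ∈ ℂ, λ, α_1 ∈ ℂ*, and let V be an infinite-dimensional irreducible L̄_r-module. Let W_s ⊆ ℂ[X_0,X_1] be the subspace spanned by { f(X_0)(X_0+X_1)^n : n ∈ ℤ_{≥0}, f ∈ ℂ[X_0], deg f ≤ s }, and let W'_s ⊆ ℂ[X_0,X_1] be the subspace spanned by { (X_0+X_1)^n f(X_1) : n ∈ ℤ_{≥0}, f ∈ ℂ[X_1], deg f ≤ s }. Then V ⊗ W_s and V ⊗ W'_s are submodules of M(V,Ω(λ,α_0)) ⊗ Ω(λ,α_1); that is, each of these subspaces of V ⊗ ℂ[X_0,X_1] is stable under all operators L_k, k ∈ ℤ. -/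
import Mathlib


open TensorProduct

/-- Substitution `X_i ↦ X_i - k` (in the variable `i` only) on `ℂ[X_0,…,X_{N-1}]`. -/
noncomputable def shiftVar {N : ℕ} (i : Fin N) (k : ℂ) :
    MvPolynomial (Fin N) ℂ →ₗ[ℂ] MvPolynomial (Fin N) ℂ :=
  (MvPolynomial.aeval fun j =>
    MvPolynomial.X j - if j = i then MvPolynomial.C k else 0).toLinearMap

/-- The operator `L_k` on `⊗_i Ω(λ_i,α_i) = ℂ[X_0,…,X_{N-1}]`. -/
noncomputable def omegaOp {N : ℕ} (lam al : Fin N → ℂ) (k : ℤ) :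
    MvPolynomial (Fin N) ℂ →ₗ[ℂ] MvPolynomial (Fin N) ℂ :=
  ∑ i : Fin N, (lam i ^ k) •
    ((LinearMap.mulLeft ℂ (MvPolynomial.X i - MvPolynomial.C ((k : ℂ) * al i))).comp
      (shiftVar i (k : ℂ)))

/-- The operator `L_k` on `M(V,Ω(λ_0,α_0)) ⊗ ⊗_{i=1}^m Ω(λ_i,α_i) = V ⊗ ℂ[X_0,…,X_m]`. -/
noncomputable def MOp {V : Type*} [AddCommGroup V] [Module ℂ V]
    (B : ℕ → V →ₗ[ℂ] V) (r : ℕ) {m : ℕ} (lam al : Fin (m + 1) → ℂ) (k : ℤ) :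
    V ⊗[ℂ] MvPolynomial (Fin (m + 1)) ℂ →ₗ[ℂ] V ⊗[ℂ] MvPolynomial (Fin (m + 1)) ℂ :=
  TensorProduct.map LinearMap.id (omegaOp lam al k) +
  ∑ j ∈ Finset.range (r + 1),
    (((k : ℂ) ^ (j + 1)) / ((j + 1).factorial : ℂ)) •
      TensorProduct.map (B j) ((lam 0 ^ k) • shiftVar 0 (k : ℂ))

/-- The subspace `W_s ⊆ ℂ[X_0,X_1]` spanned by
`{ f(X_0)(X_0+X_1)^n : n ∈ ℤ_{≥0}, deg f ≤ s }`. -/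
noncomputable def Wsub (s : ℕ) : Submodule ℂ (MvPolynomial (Fin 2) ℂ) :=
  Submodule.span ℂ {p | ∃ (n : ℕ) (f : Polynomial ℂ), f.natDegree ≤ s ∧
    p = (Polynomial.aeval (MvPolynomial.X 0 : MvPolynomial (Fin 2) ℂ) f) *
        (MvPolynomial.X 0 + MvPolynomial.X 1) ^ n}

/-- The subspace `W'_s ⊆ ℂ[X_0,X_1]` spanned by
`{ (X_0+X_1)^n f(X_1) : n ∈ ℤ_{≥0}, deg f ≤ s }`. -/
noncomputable def Wsub' (s : ℕ) : Submodule ℂ (MvPolynomial (Fin 2) ℂ) :=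
  Submodule.span ℂ {p | ∃ (n : ℕ) (f : Polynomial ℂ), f.natDegree ≤ s ∧
    p = (MvPolynomial.X 0 + MvPolynomial.X 1) ^ n *
        (Polynomial.aeval (MvPolynomial.X 1 : MvPolynomial (Fin 2) ℂ) f)}

/-- The subspace `V ⊗ Q` of `V ⊗ ℂ[X_0,X_1]` for a subspace `Q ⊆ ℂ[X_0,X_1]`. -/
noncomputable def tsub (V : Type*) [AddCommGroup V] [Module ℂ V]
    (Q : Submodule ℂ (MvPolynomial (Fin 2) ℂ)) :
    Submodule ℂ (V ⊗[ℂ] MvPolynomial (Fin 2) ℂ) :=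
  Submodule.span ℂ {x | ∃ (v : V) (w : MvPolynomial (Fin 2) ℂ), w ∈ Q ∧ x = v ⊗ₜ[ℂ] w}

lemma degAux (f : Polynomial ℂ) (c0 c1 k : ℂ) :
    ((Polynomial.X - Polynomial.C c0) * f.comp (Polynomial.X - Polynomial.C k)
      - (Polynomial.X + Polynomial.C c1) * f).natDegree ≤ f.natDegree := by
  rcases eq_or_ne f 0 with rfl | hf
  · simp
  set p := (Polynomial.X - Polynomial.C c0) * f.comp (Polynomial.X - Polynomial.C k) with hp
  set q := (Polynomial.X + Polynomial.C c1) * f with hq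
  rcases eq_or_ne p q with h | h
  · simp [h]
  have hcompd : (f.comp (Polynomial.X - Polynomial.C k)).natDegree = f.natDegree := by
    rw [Polynomial.natDegree_comp, Polynomial.natDegree_X_sub_C, mul_one]
  have hcomplc : (f.comp (Polynomial.X - Polynomial.C k)).leadingCoeff = f.leadingCoeff := by
    rw [Polynomial.leadingCoeff_comp (by rw [Polynomial.natDegree_X_sub_C]; norm_num),
      Polynomial.leadingCoeff_X_sub_C, one_pow, mul_one]
  have hcomp0 : f.comp (Polynomial.X - Polynomial.C k) ≠ 0 := by
    rw [← Polynomial.leadingCoeff_ne_zero, hcomplc, Polynomial.leadingCoeff_ne_zero]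
    exact hf
  have hp0 : p ≠ 0 := mul_ne_zero (Polynomial.X_sub_C_ne_zero c0) hcomp0
  have hq0 : q ≠ 0 := mul_ne_zero (Polynomial.monic_X_add_C c1).ne_zero hf
  have hpd : p.natDegree = f.natDegree + 1 := by
    rw [hp, Polynomial.natDegree_mul (Polynomial.X_sub_C_ne_zero c0) hcomp0,
      Polynomial.natDegree_X_sub_C, hcompd, add_comm]
  have hqd : q.natDegree = f.natDegree + 1 := by
    rw [hq, Polynomial.natDegree_mul (Polynomial.monic_X_add_C c1).ne_zero hf,
      Polynomial.natDegree_X_add_C, add_comm]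
  have hplc : p.leadingCoeff = f.leadingCoeff := by
    rw [hp, Polynomial.leadingCoeff_mul, hcomplc, Polynomial.leadingCoeff_X_sub_C, one_mul]
  have hqlc : q.leadingCoeff = f.leadingCoeff := by
    rw [hq, Polynomial.leadingCoeff_mul, (Polynomial.monic_X_add_C c1).leadingCoeff, one_mul]
  have hdeg : (p - q).degree < p.degree :=
    Polynomial.degree_sub_lt (by rw [Polynomial.degree_eq_natDegree hp0,
      Polynomial.degree_eq_natDegree hq0, hpd, hqd]) hp0 (hplc.trans hqlc.symm)
  have := Polynomial.natDegree_lt_natDegree (sub_ne_zero.mpr h) hdeg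
  omega

section
local notation "X0" => (MvPolynomial.X 0 : MvPolynomial (Fin 2) ℂ)
local notation "X1" => (MvPolynomial.X 1 : MvPolynomial (Fin 2) ℂ)

lemma memW (s : ℕ) (f g : Polynomial ℂ) (hf : f.natDegree ≤ s) :
    (Polynomial.aeval X0 f) * (Polynomial.aeval (X0 + X1) g) ∈ Wsub s := by
  induction g using Polynomial.induction_on' with
  | add p q hp hq => rw [map_add, mul_add]; exact (Wsub s).add_mem hp hq
  | monomial n a =>
      have : (Polynomial.aeval X0 f) * (Polynomial.aeval (X0 + X1) (Polynomial.monomial n a))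
          = a • ((Polynomial.aeval X0 f) * (X0 + X1) ^ n) := by
        simp [Polynomial.aeval_monomial, Algebra.smul_def]
        ring
      rw [this]
      exact (Wsub s).smul_mem a (Submodule.subset_span ⟨n, f, hf, rfl⟩)

lemma memW' (s : ℕ) (f g : Polynomial ℂ) (hf : f.natDegree ≤ s) :
    (Polynomial.aeval (X0 + X1) g) * (Polynomial.aeval X1 f) ∈ Wsub' s := by
  induction g using Polynomial.induction_on' with
  | add p q hp hq => rw [map_add, add_mul]; exact (Wsub' s).add_mem hp hq
  | monomial n a =>
      have : (Polynomial.aeval (X0 + X1) (Polynomial.monomial n a)) * (Polynomial.aeval X1 f)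
          = a • ((X0 + X1) ^ n * (Polynomial.aeval X1 f)) := by
        simp [Polynomial.aeval_monomial, Algebra.smul_def]
        ring
      rw [this]
      exact (Wsub' s).smul_mem a (Submodule.subset_span ⟨n, f, hf, rfl⟩)

lemma shiftVar_aeval (i : Fin 2) (k : ℂ) (u : MvPolynomial (Fin 2) ℂ) (f : Polynomial ℂ) :
    shiftVar i k (Polynomial.aeval u f)
      = Polynomial.aeval ((MvPolynomial.aeval fun j =>
          MvPolynomial.X j - if j = i then MvPolynomial.C k else 0) u) f := by
  show (MvPolynomial.aeval _).toLinearMap _ = _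
  rw [AlgHom.toLinearMap_apply]
  exact (Polynomial.aeval_algHom_apply _ u f).symm

lemma shiftVar_mul (i : Fin 2) (k : ℂ) (u v : MvPolynomial (Fin 2) ℂ) :
    shiftVar i k (u * v) = shiftVar i k u * shiftVar i k v := by
  simp [shiftVar]

lemma shiftVar_pow (i : Fin 2) (k : ℂ) (u : MvPolynomial (Fin 2) ℂ) (n : ℕ) :
    shiftVar i k (u ^ n) = (shiftVar i k u) ^ n := by
  simp [shiftVar]

lemma aeval_comp_sub (u : MvPolynomial (Fin 2) ℂ) (k : ℂ) (f : Polynomial ℂ) :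
    Polynomial.aeval (u - MvPolynomial.C k) f
      = Polynomial.aeval u (f.comp (Polynomial.X - Polynomial.C k)) := by
  rw [Polynomial.aeval_comp]; simp

lemma shiftVar0_aeval_X0 (k : ℂ) (f : Polynomial ℂ) :
    shiftVar (0 : Fin 2) k (Polynomial.aeval X0 f)
      = Polynomial.aeval X0 (f.comp (Polynomial.X - Polynomial.C k)) := by
  rw [shiftVar_aeval]
  have h0 : (MvPolynomial.aeval fun j : Fin 2 =>
      MvPolynomial.X j - if j = 0 then MvPolynomial.C k else 0) X0 = X0 - MvPolynomial.C k := by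
    simp
  rw [h0, aeval_comp_sub]

lemma shiftVar1_aeval_X1 (k : ℂ) (f : Polynomial ℂ) :
    shiftVar (1 : Fin 2) k (Polynomial.aeval X1 f)
      = Polynomial.aeval X1 (f.comp (Polynomial.X - Polynomial.C k)) := by
  rw [shiftVar_aeval]
  have h0 : (MvPolynomial.aeval fun j : Fin 2 =>
      MvPolynomial.X j - if j = 1 then MvPolynomial.C k else 0) X1 = X1 - MvPolynomial.C k := by
    simp
  rw [h0, aeval_comp_sub]

lemma shiftVar0_aeval_X1 (k : ℂ) (f : Polynomial ℂ) :
    shiftVar (0 : Fin 2) k (Polynomial.aeval X1 f) = Polynomial.aeval X1 f := by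
  rw [shiftVar_aeval]
  congr 1
  simp

lemma shiftVar1_aeval_X0 (k : ℂ) (f : Polynomial ℂ) :
    shiftVar (1 : Fin 2) k (Polynomial.aeval X0 f) = Polynomial.aeval X0 f := by
  rw [shiftVar_aeval]
  congr 1
  simp [Fin.ext_iff]

lemma shiftVar_sum_pow (i : Fin 2) (k : ℂ) (n : ℕ) :
    shiftVar i k ((X0 + X1) ^ n)
      = Polynomial.aeval (X0 + X1) ((Polynomial.X - Polynomial.C k) ^ n) := by
  rw [shiftVar_pow, map_add]
  have : shiftVar i k X0 + shiftVar i k X1 = X0 + X1 - MvPolynomial.C k := by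
    fin_cases i <;> simp [shiftVar] <;> ring
  rw [this, map_pow, map_sub, Polynomial.aeval_X, Polynomial.aeval_C]
  simp [MvPolynomial.algebraMap_eq]

lemma omega_memW (s : ℕ) (lam al0 al1 : ℂ) (k : ℤ) (n : ℕ) (f : Polynomial ℂ)
    (hf : f.natDegree ≤ s) :
    omegaOp (fun _ => lam) ![al0, al1] k ((Polynomial.aeval X0 f) * (X0 + X1) ^ n)
      ∈ Wsub s := by
  have hs0 : shiftVar (0 : Fin 2) (k : ℂ) ((Polynomial.aeval X0 f) * (X0 + X1) ^ n)
      = Polynomial.aeval X0 (f.comp (Polynomial.X - Polynomial.C (k : ℂ)))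
        * Polynomial.aeval (X0 + X1) ((Polynomial.X - Polynomial.C (k : ℂ)) ^ n) := by
    rw [shiftVar_mul, shiftVar0_aeval_X0, shiftVar_sum_pow]
  have hs1 : shiftVar (1 : Fin 2) (k : ℂ) ((Polynomial.aeval X0 f) * (X0 + X1) ^ n)
      = Polynomial.aeval X0 f
        * Polynomial.aeval (X0 + X1) ((Polynomial.X - Polynomial.C (k : ℂ)) ^ n) := by
    rw [shiftVar_mul, shiftVar1_aeval_X0, shiftVar_sum_pow]
  rw [omegaOp, Fin.sum_univ_two]
  simp only [LinearMap.add_apply, LinearMap.smul_apply, LinearMap.coe_comp,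
    Function.comp_apply, LinearMap.mulLeft_apply, Matrix.cons_val_zero, Matrix.cons_val_one,
    Matrix.head_cons, hs0, hs1]
  rw [← smul_add]
  set gA := (Polynomial.X - Polynomial.C ((k : ℂ) * al0))
      * f.comp (Polynomial.X - Polynomial.C (k : ℂ))
      - (Polynomial.X + Polynomial.C ((k : ℂ) * al1)) * f with hgA
  have key : (X0 - MvPolynomial.C ((k : ℂ) * al0))
        * (Polynomial.aeval X0 (f.comp (Polynomial.X - Polynomial.C (k : ℂ)))
          * Polynomial.aeval (X0 + X1) ((Polynomial.X - Polynomial.C (k : ℂ)) ^ n))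
      + (X1 - MvPolynomial.C ((k : ℂ) * al1))
        * (Polynomial.aeval X0 f
          * Polynomial.aeval (X0 + X1) ((Polynomial.X - Polynomial.C (k : ℂ)) ^ n))
      = Polynomial.aeval X0 gA
          * Polynomial.aeval (X0 + X1) ((Polynomial.X - Polynomial.C (k : ℂ)) ^ n)
        + Polynomial.aeval X0 f
          * Polynomial.aeval (X0 + X1)
              (Polynomial.X * (Polynomial.X - Polynomial.C (k : ℂ)) ^ n) := by
    simp only [hgA, map_sub, map_add, map_mul, map_pow, Polynomial.aeval_X,
      Polynomial.aeval_C, MvPolynomial.algebraMap_eq]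
    ring
  rw [key]
  exact Submodule.smul_mem _ _ (add_mem
    (memW s gA _ (le_trans (degAux f _ _ _) hf)) (memW s f _ hf))

lemma omega_memW' (s : ℕ) (lam al0 al1 : ℂ) (k : ℤ) (n : ℕ) (f : Polynomial ℂ)
    (hf : f.natDegree ≤ s) :
    omegaOp (fun _ => lam) ![al0, al1] k ((X0 + X1) ^ n * (Polynomial.aeval X1 f))
      ∈ Wsub' s := by
  have hs0 : shiftVar (0 : Fin 2) (k : ℂ) ((X0 + X1) ^ n * (Polynomial.aeval X1 f))
      = Polynomial.aeval (X0 + X1) ((Polynomial.X - Polynomial.C (k : ℂ)) ^ n)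
        * Polynomial.aeval X1 f := by
    rw [shiftVar_mul, shiftVar0_aeval_X1, shiftVar_sum_pow]
  have hs1 : shiftVar (1 : Fin 2) (k : ℂ) ((X0 + X1) ^ n * (Polynomial.aeval X1 f))
      = Polynomial.aeval (X0 + X1) ((Polynomial.X - Polynomial.C (k : ℂ)) ^ n)
        * Polynomial.aeval X1 (f.comp (Polynomial.X - Polynomial.C (k : ℂ))) := by
    rw [shiftVar_mul, shiftVar1_aeval_X1, shiftVar_sum_pow]
  rw [omegaOp, Fin.sum_univ_two]
  simp only [LinearMap.add_apply, LinearMap.smul_apply, LinearMap.coe_comp,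
    Function.comp_apply, LinearMap.mulLeft_apply, Matrix.cons_val_zero, Matrix.cons_val_one,
    Matrix.head_cons, hs0, hs1]
  rw [← smul_add]
  set gA := (Polynomial.X - Polynomial.C ((k : ℂ) * al1))
      * f.comp (Polynomial.X - Polynomial.C (k : ℂ))
      - (Polynomial.X + Polynomial.C ((k : ℂ) * al0)) * f with hgA
  have key : (X0 - MvPolynomial.C ((k : ℂ) * al0))
        * (Polynomial.aeval (X0 + X1) ((Polynomial.X - Polynomial.C (k : ℂ)) ^ n)
          * Polynomial.aeval X1 f)
      + (X1 - MvPolynomial.C ((k : ℂ) * al1))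
        * (Polynomial.aeval (X0 + X1) ((Polynomial.X - Polynomial.C (k : ℂ)) ^ n)
          * Polynomial.aeval X1 (f.comp (Polynomial.X - Polynomial.C (k : ℂ))))
      = Polynomial.aeval (X0 + X1)
            (Polynomial.X * (Polynomial.X - Polynomial.C (k : ℂ)) ^ n)
          * Polynomial.aeval X1 f
        + Polynomial.aeval (X0 + X1) ((Polynomial.X - Polynomial.C (k : ℂ)) ^ n)
          * Polynomial.aeval X1 gA := by
    simp only [hgA, map_sub, map_add, map_mul, map_pow, Polynomial.aeval_X,
      Polynomial.aeval_C, MvPolynomial.algebraMap_eq]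
    ring
  rw [key]
  exact Submodule.smul_mem _ _ (add_mem
    (memW' s f _ hf) (memW' s gA _ (le_trans (degAux f _ _ _) hf)))
end

lemma MOp_stab {V : Type*} [AddCommGroup V] [Module ℂ V] (B : ℕ → V →ₗ[ℂ] V) (r : ℕ)
    (lam al : Fin 2 → ℂ) (k : ℤ) (Q : Submodule ℂ (MvPolynomial (Fin 2) ℂ))
    (h1 : ∀ w ∈ Q, omegaOp lam al k w ∈ Q)
    (h2 : ∀ w ∈ Q, shiftVar 0 (k : ℂ) w ∈ Q) :
    ∀ x ∈ tsub V Q, MOp B r lam al k x ∈ tsub V Q := by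
  intro x hx
  have h : tsub V Q ≤ (tsub V Q).comap (MOp B r lam al k) := by
    refine Submodule.span_le.mpr ?_
    rintro y ⟨v, w, hw, rfl⟩
    simp only [SetLike.mem_coe, Submodule.mem_comap, MOp, LinearMap.add_apply,
      LinearMap.coe_sum, Finset.sum_apply, LinearMap.smul_apply,
      TensorProduct.map_tmul, LinearMap.id_coe, id_eq]
    refine Submodule.add_mem _ (Submodule.subset_span ⟨v, _, h1 w hw, rfl⟩)
      (Submodule.sum_mem _ fun j _ => Submodule.smul_mem _ _
        (Submodule.subset_span ⟨B j v, _, ?_, rfl⟩))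
    exact Q.smul_mem _ (h2 w hw)
  exact h hx

section
local notation "X0" => (MvPolynomial.X 0 : MvPolynomial (Fin 2) ℂ)
local notation "X1" => (MvPolynomial.X 1 : MvPolynomial (Fin 2) ℂ)

lemma natDegree_comp_le (f : Polynomial ℂ) (k : ℂ) (s : ℕ) (hf : f.natDegree ≤ s) :
    (f.comp (Polynomial.X - Polynomial.C k)).natDegree ≤ s := by
  rwa [Polynomial.natDegree_comp, Polynomial.natDegree_X_sub_C, mul_one]


/-- **Lemma 3.3.** Let `r, s ∈ ℤ_{≥0}`, `α_0 ∈ ℂ`, `λ, α_1 ∈ ℂ*`, and `V` an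
infinite-dimensional irreducible `L̄_r`-module. Then `V ⊗ W_s` and `V ⊗ W'_s` are
submodules of `M(V,Ω(λ,α_0)) ⊗ Ω(λ,α_1)`, i.e. stable under all `L_k`. -/
theorem statement4 {V : Type*} [AddCommGroup V] [Module ℂ V]
    (r s : ℕ) (al0 : ℂ) (lam al1 : ℂ) (hlam : lam ≠ 0) (hal1 : al1 ≠ 0)
    (B : ℕ → V →ₗ[ℂ] V)
    (hBtop : ∀ i, r < i → B i = 0)
    (hBrel : ∀ i j, i ≤ r → j ≤ r →
      B i ∘ₗ B j - B j ∘ₗ B i = (((j : ℂ) - (i : ℂ)) • B (i + j) : V →ₗ[ℂ] V))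
    (hVirr : ∀ U : Submodule ℂ V, (∀ i, i ≤ r → ∀ w ∈ U, B i w ∈ U) → U = ⊥ ∨ U = ⊤)
    (hVinf : ¬ Module.Finite ℂ V) :
    (∀ k : ℤ, ∀ x ∈ tsub V (Wsub s),
        MOp B r (fun _ => lam) ![al0, al1] k x ∈ tsub V (Wsub s)) ∧
    (∀ k : ℤ, ∀ x ∈ tsub V (Wsub' s),
        MOp B r (fun _ => lam) ![al0, al1] k x ∈ tsub V (Wsub' s)) := by
  constructor
  · intro k
    refine MOp_stab B r _ _ k (Wsub s) (fun w hw => ?_) (fun w hw => ?_)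
    · have h : Wsub s ≤ (Wsub s).comap (omegaOp (fun _ => lam) ![al0, al1] k) :=
        Submodule.span_le.mpr (by
          rintro p ⟨n, f, hf, rfl⟩
          exact omega_memW s lam al0 al1 k n f hf)
      exact h hw
    · have h : Wsub s ≤ (Wsub s).comap (shiftVar (0 : Fin 2) (k : ℂ)) :=
        Submodule.span_le.mpr (by
          rintro p ⟨n, f, hf, rfl⟩
          simp only [SetLike.mem_coe, Submodule.mem_comap]
          rw [shiftVar_mul, shiftVar0_aeval_X0, shiftVar_sum_pow]
          exact memW s _ _ (natDegree_comp_le f _ s hf))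
      exact h hw
  · intro k
    refine MOp_stab B r _ _ k (Wsub' s) (fun w hw => ?_) (fun w hw => ?_)
    · have h : Wsub' s ≤ (Wsub' s).comap (omegaOp (fun _ => lam) ![al0, al1] k) :=
        Submodule.span_le.mpr (by
          rintro p ⟨n, f, hf, rfl⟩
          exact omega_memW' s lam al0 al1 k n f hf)
      exact h hw
    · have h : Wsub' s ≤ (Wsub' s).comap (shiftVar (0 : Fin 2) (k : ℂ)) :=
        Submodule.span_le.mpr (by
          rintro p ⟨n, f, hf, rfl⟩
          simp only [SetLike.mem_coe, Submodule.mem_comap]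
          rw [shiftVar_mul, shiftVar0_aeval_X1, shiftVar_sum_pow]
          exact memW' s f _ hf)
      exact h hw
end
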